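/- For γ ≠ -1 and any constant c, the function ũ(t̃,x̃) = (1+γ)x̃ + ln|(1+γ)/(e^{-(t̃+c)(1+γ)} - 1)| satisfies e^{x̃} ũ_t = (e^{x̃} ũ_x)_x + e^{-γx̃} e^{ũ} on the region where e^{-(t̃+c)(1+γ)} - 1 and 1+γ have the same (positive) sign. -/

import Mathlib

/-- u(t,x) = (1+γ)x + ln((1+γ)/(e^{-(t+c)(1+γ)} - 1)) solves
    e^x u_t = (e^x u_x)_x + e^{-γx} e^u on the region where the denominator is positive. -/
theorem stmt2 (γ c : ℝ) (hγ : γ ≠ -1) (hγ' : 1 + γ > 0)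
    (u : ℝ → ℝ → ℝ)
    (hu : ∀ t x, u t x =
      (1 + γ) * x + Real.log ((1 + γ) / (Real.exp (-(t + c) * (1 + γ)) - 1))) :
    ∀ t x : ℝ, Real.exp (-(t + c) * (1 + γ)) - 1 > 0 →
      Real.exp x * deriv (fun s => u s x) t =
        deriv (fun y => Real.exp y * deriv (fun y' => u t y') y) x
          + Real.exp (-γ * x) * Real.exp (u t x) := by
  intro t x ht
  set E : ℝ := Real.exp (-(t + c) * (1 + γ)) with hE
  -- x-derivative is constant 1+γ
  have hx : ∀ y, deriv (fun y' => u t y') y = 1 + γ := by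
    intro y
    have h1 : (fun y' => u t y') =
        fun y' => (1 + γ) * y' + Real.log ((1 + γ) / (E - 1)) :=
      funext fun y' => hu t y'
    rw [h1]
    have : HasDerivAt (fun y' : ℝ => (1 + γ) * y' + Real.log ((1 + γ) / (E - 1)))
        (1 + γ) y := by
      simpa using ((hasDerivAt_id y).const_mul (1 + γ)).add_const (Real.log ((1 + γ) / (E - 1)))
    exact this.deriv
  -- second term on RHS: derivative of e^y (1+γ)
  have hxx : deriv (fun y => Real.exp y * deriv (fun y' => u t y') y) x
      = Real.exp x * (1 + γ) := by
    have h1 : (fun y => Real.exp y * deriv (fun y' => u t y') y)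
        = fun y => Real.exp y * (1 + γ) := funext fun y => by rw [hx y]
    rw [h1]
    exact ((Real.hasDerivAt_exp x).mul_const (1 + γ)).deriv
  -- t-derivative
  have hEc : ∀ s : ℝ, HasDerivAt (fun s : ℝ => Real.exp (-(s + c) * (1 + γ)) - 1)
      (Real.exp (-(s + c) * (1 + γ)) * (-(1 + γ))) s := by
    intro s
    have h0 : HasDerivAt (fun s : ℝ => -(s + c) * (1 + γ)) (-(1 + γ)) s := by
      simpa using (((hasDerivAt_id s).add_const c).neg.mul_const (1 + γ))
    simpa using (h0.exp.sub_const 1)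
  have hcont : ContinuousAt (fun s : ℝ => Real.exp (-(s + c) * (1 + γ)) - 1) t :=
    (hEc t).continuousAt
  have hev : ∀ᶠ s in nhds t, (0 : ℝ) < Real.exp (-(s + c) * (1 + γ)) - 1 :=
    hcont (isOpen_Ioi.mem_nhds ht)
  have hlog : HasDerivAt (fun s : ℝ => Real.log (Real.exp (-(s + c) * (1 + γ)) - 1))
      ((E * (-(1 + γ))) / (E - 1)) t := (hEc t).log (ne_of_gt ht)
  have hg : HasDerivAt (fun s : ℝ => (1 + γ) * x + (Real.log (1 + γ)
      - Real.log (Real.exp (-(s + c) * (1 + γ)) - 1)))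
      (-(E * (-(1 + γ)) / (E - 1))) t := by
    simpa using (((hasDerivAt_const t (Real.log (1 + γ))).sub hlog).const_add ((1 + γ) * x))
  have hueq : (fun s => u s x) =ᶠ[nhds t] fun s => (1 + γ) * x + (Real.log (1 + γ)
      - Real.log (Real.exp (-(s + c) * (1 + γ)) - 1)) := by
    filter_upwards [hev] with s hs
    rw [hu s x, Real.log_div (ne_of_gt hγ') (ne_of_gt hs)]
  have hut : HasDerivAt (fun s => u s x) (-(E * (-(1 + γ)) / (E - 1))) t :=
    hg.congr_of_eventuallyEq hueq
  rw [hut.deriv, hxx, hu t x, Real.exp_add,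
    Real.exp_log (div_pos hγ' ht)]
  have hx1 : Real.exp (-γ * x) * Real.exp ((1 + γ) * x) = Real.exp x := by
    rw [← Real.exp_add]; ring_nf
  have hE1 : E - 1 ≠ 0 := ne_of_gt ht
  rw [← mul_assoc, hx1]
  field_simp
  ring
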